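/- Let P ∈ F_q[T] be a monic irreducible polynomial with P ≠ T. If P(−S²) is reducible in F_q[S], then χ_q(P(0)) = 1, i.e., the Legendre symbol (P/T) equals 1. -/

import Mathlib

open Polynomial

/-- If `P ≠ T` is a monic irreducible in `F_q[T]` (`q` odd) such that `P(-S²)`
is reducible in `F_q[S]`, then the Legendre symbol `(P/T) = χ_q(P(0))` is `1`. -/
theorem legendre_one_of_reducible (F : Type) [Field F] [Fintype F] [DecidableEq F]
    (hq : Odd (Fintype.card F)) (P : F[X]) (hP : P.Monic) (hirr : Irreducible P)
    (hPT : P ≠ X) (hred : ¬ Irreducible (P.comp (-(X ^ 2)))) :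
    quadraticChar F (P.eval 0) = 1 := by
  classical
  have hP0 : P ≠ 0 := hirr.ne_zero
  have hn1 : 0 < P.natDegree :=
    natDegree_pos_iff_degree_pos.mpr (degree_pos_of_irreducible hirr)
  set Q : F[X] := P.comp (-(X ^ 2)) with hQdef
  have hQdeg : Q.natDegree = P.natDegree * 2 := by
    rw [hQdef, natDegree_comp]
    congr 1
    simp [natDegree_X_pow]
  have hQ0 : Q ≠ 0 := by
    intro h
    rw [h, natDegree_zero] at hQdeg
    omega
  have hQu : ¬ IsUnit Q := Q.not_isUnit_of_natDegree_pos (by omega)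
  rw [irreducible_iff] at hred
  push_neg at hred
  obtain ⟨a, b, hab, hau, hbu⟩ := hred hQu
  have ha0 : a ≠ 0 := fun h => hQ0 (by rw [hab, h, zero_mul])
  have hb0 : b ≠ 0 := fun h => hQ0 (by rw [hab, h, mul_zero])
  have hdegsum : a.natDegree + b.natDegree = P.natDegree * 2 := by
    rw [← natDegree_mul ha0 hb0, ← hab, hQdeg]
  -- pick a nonunit factor of degree ≤ deg P
  obtain ⟨c, hc0, hcu, hcd, hcn⟩ :
      ∃ c : F[X], c ≠ 0 ∧ ¬ IsUnit c ∧ c ∣ Q ∧ c.natDegree ≤ P.natDegree := by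
    by_cases h : a.natDegree ≤ P.natDegree
    · exact ⟨a, ha0, hau, ⟨b, hab⟩, h⟩
    · exact ⟨b, hb0, hbu, ⟨a, by rw [hab, mul_comm]⟩, by omega⟩
  obtain ⟨A, hAirr, hAc⟩ := WfDvdMonoid.exists_irreducible_factor hcu hc0
  have hA0 : A ≠ 0 := hAirr.ne_zero
  have hAQ : A ∣ Q := hAc.trans hcd
  have hAn : A.natDegree ≤ P.natDegree := (natDegree_le_of_dvd hAc hc0).trans hcn
  haveI := Fact.mk hAirr
  -- the field L = F[S]/(A), with s = class of S, so that -(s^2) is a root of P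
  set L := AdjoinRoot A
  set s : L := AdjoinRoot.root A with hs
  have hsQ : (aeval s) Q = 0 := by
    obtain ⟨d, hd⟩ := hAQ
    rw [hd, map_mul, AdjoinRoot.aeval_eq, AdjoinRoot.mk_self, zero_mul]
  have hαP : (aeval (-(s ^ 2))) P = 0 := by
    have := hsQ
    rw [hQdef, aeval_comp] at this
    simpa using this
  have hminα : minpoly F (-(s ^ 2)) = P :=
    (minpoly.eq_of_irreducible_of_monic hirr hαP hP).symm
  -- L is finite dimensional of dimension = deg A over F
  haveI : FiniteDimensional F L := (AdjoinRoot.powerBasis hA0).finite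
  have hfinL : Module.finrank F L = A.natDegree := by
    rw [(AdjoinRoot.powerBasis hA0).finrank, AdjoinRoot.powerBasis_dim]
  have hfinL' : Module.finrank F L = P.natDegree := by
    have h1 : P.natDegree ≤ Module.finrank F L := by
      have := minpoly.natDegree_le (A := F) (-(s ^ 2) : L)
      rwa [hminα] at this
    omega
  -- the field K = F[T]/(P)
  haveI := Fact.mk hirr
  set K := AdjoinRoot P
  haveI : FiniteDimensional F K := (AdjoinRoot.powerBasis hP0).finite
  have hfinK : Module.finrank F K = P.natDegree := by
    rw [(AdjoinRoot.powerBasis hP0).finrank, AdjoinRoot.powerBasis_dim]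
  -- the embedding K →ₐ[F] L sending root P to -(s^2) is bijective
  set φ : K →ₐ[F] L := AdjoinRoot.liftAlgHom P (Algebra.ofId F L) (-(s ^ 2)) (by rw [← hαP, aeval_def]; rfl) with hφ
  have hinj : Function.Injective φ := φ.toRingHom.injective
  haveI : Finite K := Module.finite_of_finite F
  haveI : Finite L := Module.finite_of_finite F
  haveI : Fintype K := Fintype.ofFinite K
  haveI : Fintype L := Fintype.ofFinite L
  have hcard : Fintype.card K = Fintype.card L := by
    rw [Module.card_eq_pow_finrank (K := F) (V := K), Module.card_eq_pow_finrank (K := F) (V := L),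
      hfinK, hfinL']
  have hbij : Function.Bijective φ :=
    (Fintype.bijective_iff_injective_and_card φ).mpr ⟨hinj, hcard⟩
  -- hence -(root P) is a square in K
  obtain ⟨u, hu⟩ := hbij.2 s
  have hu2 : u ^ 2 = -(AdjoinRoot.root P) := by
    apply hinj
    rw [map_pow, hu, map_neg, hφ, AdjoinRoot.liftAlgHom_root, neg_neg]
  -- take norms
  have hnorm_root : Algebra.norm F (AdjoinRoot.root P) =
      (-1) ^ P.natDegree * P.coeff 0 := by
    have := Algebra.PowerBasis.norm_gen_eq_coeff_zero_minpoly (AdjoinRoot.powerBasis hP0)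
    rwa [AdjoinRoot.minpoly_powerBasis_gen_of_monic hP, AdjoinRoot.powerBasis_gen,
      AdjoinRoot.powerBasis_dim] at this
  have hnorm_neg : Algebra.norm F (-(AdjoinRoot.root P)) = P.coeff 0 := by
    have : (-(AdjoinRoot.root P) : K) =
        algebraMap F K (-1) * AdjoinRoot.root P := by
      rw [map_neg, map_one, neg_one_mul]
    rw [this, map_mul, Algebra.norm_algebraMap, hfinK, hnorm_root]
    rw [← mul_assoc, ← pow_add, ← two_mul, pow_mul]
    simp
  have hsq : IsSquare (P.eval 0) := by
    refine ⟨Algebra.norm F u, ?_⟩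
    have : Algebra.norm F (u ^ 2) = P.coeff 0 := by rw [hu2, hnorm_neg]
    rw [map_pow] at this
    rw [← coeff_zero_eq_eval_zero, ← this, sq]
  -- P(0) ≠ 0 since P ≠ X
  have hne : P.eval 0 ≠ 0 := by
    intro h
    have hXdvd : X ∣ P := by
      have := (dvd_iff_isRoot (p := P) (a := 0)).mpr h
      simpa using this
    obtain ⟨e, he⟩ := hXdvd
    rcases hirr.isUnit_or_isUnit he with h' | h'
    · exact Polynomial.not_isUnit_X h'
    · obtain ⟨v, hv⟩ := h'
      have hassoc : Associated (X : F[X]) P := ⟨v, by rw [he, ← hv]⟩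
      exact hPT (eq_of_monic_of_associated hP monic_X hassoc.symm)
  exact (quadraticChar_one_iff_isSquare hne).mpr hsq
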